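/- Let F = (x²+y²−2zt)/2, S = (0, 1, z₀, t₀) with z₀ − t₀/2 = i and t₀ ≠ −i (so x₀ = 0, y₀ = 1, x₀²+y₀² = 1 ≠ 0 and x₀²+y₀²+(z₀−t₀/2)² = 0). Parametrize the paraboloid near E = [0:i:−1/2:1] by h(x,y) = (x, i+y, (x²+(i+y)²)/2, 1). Then Δ_S F(h(x,y)) = y(1 − it₀) − t₀(x²+y²)/2 and Q(∇F)(h(x,y)) = 2iy + x² + y². Consequently the intersection multiplicity at the origin of the plane curves {Δ_S F∘h = 0} and {Q(∇F)∘h = 0} equals 2. -/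

import Mathlib

open Complex MvPolynomial

/-- `Δ_S F ∘ h` pulled back to `ℂ[x,y]`: for `S = (0,1,z₀,t₀)` and
`h(x,y) = (x, i+y, (x²+(i+y)²)/2, 1)` on the paraboloid `F = (x²+y²−2zt)/2`. -/
noncomputable def f19 (z0 t0 : ℂ) : MvPolynomial (Fin 2) ℂ :=
  C (0 : ℂ) * X 0 + C (1 : ℂ) * (C I + X 1) - C z0 -
    C t0 * (C (2 : ℂ)⁻¹ * (X 0 ^ 2 + (C I + X 1) ^ 2))

/-- `Q(∇F) ∘ h = x² + (i+y)² + 1` pulled back to `ℂ[x,y]`. -/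
noncomputable def g19 : MvPolynomial (Fin 2) ℂ :=
  X 0 ^ 2 + (C I + X 1) ^ 2 + 1

/-- The local intersection number at the origin of two plane curves, defined as the
`ℂ`-dimension of `ℂ[[x,y]]/(f,g)`. -/
noncomputable def interMult (f g : MvPolynomial (Fin 2) ℂ) : ℕ :=
  Module.finrank ℂ
    (MvPowerSeries (Fin 2) ℂ ⧸
      Ideal.span {(f : MvPowerSeries (Fin 2) ℂ), (g : MvPowerSeries (Fin 2) ℂ)})

section Aux

open Finsupp TrivSqZeroExt

noncomputable abbrev e0' : Fin 2 →₀ ℕ := Finsupp.single 0 1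

lemma coeff_e0_mul (F G : MvPowerSeries (Fin 2) ℂ) :
    MvPowerSeries.coeff (R := ℂ) e0' (F * G) =
      MvPowerSeries.coeff (R := ℂ) 0 F * MvPowerSeries.coeff (R := ℂ) e0' G +
      MvPowerSeries.coeff (R := ℂ) e0' F * MvPowerSeries.coeff (R := ℂ) 0 G := by
  rw [MvPowerSeries.coeff_mul, e0', Finsupp.antidiagonal_single, Finset.sum_map]
  have : Finset.HasAntidiagonal.antidiagonal (1 : ℕ) = {(0,1),(1,0)} := by decide
  rw [this]; simp

/-- Truncation to first order, as an algebra homomorphism to the dual numbers. -/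
noncomputable def phi : MvPowerSeries (Fin 2) ℂ →ₐ[ℂ] DualNumber ℂ where
  toFun F := inl (MvPowerSeries.coeff (R := ℂ) 0 F) + inr (MvPowerSeries.coeff (R := ℂ) e0' F)
  map_one' := by simp [MvPowerSeries.coeff_one, Finsupp.single_eq_zero]
  map_mul' F G := by
    rw [coeff_e0_mul]
    simp only [map_mul, add_mul, mul_add, inl_mul_inl, inl_mul_inr, inr_mul_inl, inr_mul_inr,
      MvPowerSeries.coeff_zero_eq_constantCoeff, map_mul, inr_add, smul_eq_mul,
      MulOpposite.smul_eq_mul_unop, MulOpposite.unop_op]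
    ring_nf
  map_zero' := by simp
  map_add' F G := by simp only [map_add, inl_add, inr_add]; abel
  commutes' r := by
    simp [MvPowerSeries.algebraMap_apply, MvPowerSeries.coeff_C, Finsupp.single_eq_zero,
      TrivSqZeroExt.algebraMap_eq_inl']

lemma phi_apply (F : MvPowerSeries (Fin 2) ℂ) :
    phi F = inl (MvPowerSeries.coeff (R := ℂ) 0 F) + inr (MvPowerSeries.coeff (R := ℂ) e0' F) := rfl

lemma phi_eq_zero_iff (F : MvPowerSeries (Fin 2) ℂ) :
    phi F = 0 ↔ MvPowerSeries.coeff (R := ℂ) 0 F = 0 ∧ MvPowerSeries.coeff (R := ℂ) e0' F = 0 := by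
  rw [phi_apply]
  constructor
  · intro h
    exact ⟨by simpa using congrArg TrivSqZeroExt.fst h,
      by simpa using congrArg TrivSqZeroExt.snd h⟩
  · rintro ⟨h1, h2⟩; simp [h1, h2]

lemma hX1mono : (MvPowerSeries.X 1 : MvPowerSeries (Fin 2) ℂ) =
    MvPowerSeries.monomial (R := ℂ) (Finsupp.single 1 1) 1 := rfl

lemma hX0mono : (MvPowerSeries.X 0 : MvPowerSeries (Fin 2) ℂ) ^ 2 =
    MvPowerSeries.monomial (R := ℂ) (Finsupp.single 0 2) 1 := MvPowerSeries.X_pow_eq 0 2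

lemma ker_phi : RingHom.ker phi =
    Ideal.span {MvPowerSeries.X 1, (MvPowerSeries.X 0) ^ 2} := by
  ext F
  rw [RingHom.mem_ker, phi_eq_zero_iff, Ideal.mem_span_pair]
  constructor
  · rintro ⟨h0, he⟩
    classical
    let A : MvPowerSeries (Fin 2) ℂ := fun m => MvPowerSeries.coeff (R := ℂ) (m + Finsupp.single 1 1) F
    let B : MvPowerSeries (Fin 2) ℂ :=
      fun m => if m 1 = 0 then MvPowerSeries.coeff (R := ℂ) (m + Finsupp.single 0 2) F else 0
    refine ⟨A, B, ?_⟩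
    ext m
    rw [map_add, mul_comm, mul_comm _ ((MvPowerSeries.X 0 : MvPowerSeries (Fin 2) ℂ) ^ 2),
      hX1mono, hX0mono, MvPowerSeries.coeff_monomial_mul, MvPowerSeries.coeff_monomial_mul]
    have hA : ∀ d : Fin 2 →₀ ℕ, MvPowerSeries.coeff d A =
        MvPowerSeries.coeff (R := ℂ) (d + Finsupp.single 1 1) F := fun d => rfl
    have hB : ∀ d : Fin 2 →₀ ℕ, MvPowerSeries.coeff d B = (if d 1 = 0 then
        MvPowerSeries.coeff (R := ℂ) (d + Finsupp.single 0 2) F else 0) := fun d => rfl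
    simp only [one_mul, hA, hB]
    by_cases h1 : 1 ≤ m 1
    · rw [if_pos (Finsupp.single_le_iff.2 h1)]
      rw [tsub_add_cancel_of_le (Finsupp.single_le_iff.2 h1)]
      have h2 : (m - Finsupp.single 0 2 : Fin 2 →₀ ℕ) 1 ≠ 0 := by
        rw [Finsupp.tsub_apply]
        simp [Finsupp.single_apply]
        omega
      split_ifs with h3 <;> ring
    · rw [if_neg (by simpa [Finsupp.single_le_iff] using h1)]
      by_cases h2 : Finsupp.single 0 2 ≤ m
      · rw [if_pos h2]
        have hm1 : (m - Finsupp.single 0 2 : Fin 2 →₀ ℕ) 1 = 0 := by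
          rw [Finsupp.tsub_apply]; simp [Finsupp.single_apply]; omega
        rw [if_pos hm1, tsub_add_cancel_of_le h2]; ring
      · rw [if_neg h2]
        have hm1 : m 1 = 0 := by omega
        have hm0 : m 0 < 2 := by
          by_contra h
          exact h2 (Finsupp.single_le_iff.2 (by omega))
        have hm : m = Finsupp.single 0 (m 0) := by
          ext i; fin_cases i <;> simp [Finsupp.single_apply, hm1]
        interval_cases h : m 0
        · have hme : m = 0 := by rw [hm]; exact Finsupp.single_zero 0
          subst hme; simpa using h0.symm
        · have hme : m = e0' := by rw [hm]
          subst hme; simpa using he.symm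
  · rintro ⟨a, b, rfl⟩
    rw [map_add, map_add]
    rw [hX1mono, hX0mono]
    constructor <;>
      simp [MvPowerSeries.coeff_mul_monomial, Finsupp.single_le_iff, Finsupp.single_apply]

lemma phi_surj : Function.Surjective phi := by
  intro x
  refine ⟨MvPowerSeries.C (σ := Fin 2) (R := ℂ) x.fst + MvPowerSeries.X 0 * MvPowerSeries.C (σ := Fin 2) (R := ℂ) x.snd,
    ?_⟩
  rw [map_add, map_mul, phi_apply, phi_apply, phi_apply]
  classical
  have hz : ((0 : Fin 2 →₀ ℕ) = Finsupp.single 0 1) = False := by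
    simp [eq_comm, Finsupp.single_eq_zero]
  simp only [MvPowerSeries.coeff_C, MvPowerSeries.coeff_X, e0', hz, if_false, if_true,
    Finsupp.single_eq_zero, eq_self_iff_true, one_ne_zero, if_neg, inl_zero, inr_zero,
    add_zero, zero_add]
  rw [inr_mul_inl, show (MulOpposite.op (snd x) • (1:ℂ)) = snd x from by
    simp [MulOpposite.smul_eq_mul_unop]]
  exact inl_fst_add_inr_snd_eq x

/-- The dual numbers are linearly a product. -/
noncomputable def dualEquivProd : DualNumber ℂ ≃ₗ[ℂ] (ℂ × ℂ) where
  toFun x := (x.fst, x.snd)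
  invFun p := inl p.1 + inr p.2
  left_inv x := inl_fst_add_inr_snd_eq x
  right_inv p := by simp
  map_add' x y := by simp
  map_smul' c x := by simp

lemma finrank_dual : Module.finrank ℂ (DualNumber ℂ) = 2 := by
  rw [dualEquivProd.finrank_eq, Module.finrank_prod, Module.finrank_self]

lemma finrank_quot : Module.finrank ℂ
    (MvPowerSeries (Fin 2) ℂ ⧸
      Ideal.span {MvPowerSeries.X 1, (MvPowerSeries.X 0 : MvPowerSeries (Fin 2) ℂ) ^ 2}) = 2 := by
  rw [← ker_phi,
    (Ideal.quotientKerAlgEquivOfSurjective phi_surj).toLinearEquiv.finrank_eq]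
  exact finrank_dual

end Aux

/-- For the paraboloid, `S = (0,1,z₀,t₀)` with `z₀ − t₀/2 = i` and `t₀ ≠ −i`:
`Δ_S F ∘ h = y(1−it₀) − t₀(x²+y²)/2`, `Q(∇F) ∘ h = 2iy + x² + y²`, and the
intersection multiplicity at the origin of the two curves equals `2`. -/
theorem stmt19 (z0 t0 : ℂ) (hz : z0 - t0 / 2 = I) (ht : t0 ≠ -I) :
    (∀ a b : ℂ, eval (![a, b] : Fin 2 → ℂ) (f19 z0 t0) =
      b * (1 - I * t0) - t0 * (a ^ 2 + b ^ 2) / 2) ∧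
    (∀ a b : ℂ, eval (![a, b] : Fin 2 → ℂ) g19 = 2 * I * b + a ^ 2 + b ^ 2) ∧
    interMult (f19 z0 t0) g19 = 2 := by
  have hz0 : z0 = I + t0 * 2⁻¹ := by linear_combination hz
  refine ⟨?_, ?_, ?_⟩
  · intro a b
    rw [f19, hz0]
    simp
    linear_combination (-(t0/2) : ℂ) * I_sq
  · intro a b
    rw [g19]
    simp
    linear_combination I_sq
  · -- polynomial identities
    have hCI2 : (C I : MvPolynomial (Fin 2) ℂ) ^ 2 = -1 := by
      rw [← map_pow, I_sq, map_neg, map_one]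
    have q1 : f19 z0 t0 + C (t0 * 2⁻¹) * g19 = X 1 := by
      rw [f19, g19, hz0, map_add, map_mul]
      simp only [map_zero, map_one, zero_mul, one_mul]
      ring
    have q2 : g19 = X 0 ^ 2 + C (2 * I) * X 1 + X 1 ^ 2 := by
      rw [g19, map_mul]
      have h2 : (C 2 : MvPolynomial (Fin 2) ℂ) = 2 := map_ofNat C 2
      rw [h2]
      linear_combination hCI2
    -- cast to power series
    set F : MvPowerSeries (Fin 2) ℂ := (f19 z0 t0 : MvPowerSeries (Fin 2) ℂ) with hF
    set G : MvPowerSeries (Fin 2) ℂ := (g19 : MvPowerSeries (Fin 2) ℂ) with hG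
    have HF : F + MvPowerSeries.C (σ := Fin 2) (R := ℂ) (t0 * 2⁻¹) * G = MvPowerSeries.X 1 := by
      rw [hF, hG, ← MvPolynomial.coe_C, ← MvPolynomial.coe_mul, ← MvPolynomial.coe_add,
        ← MvPolynomial.coe_X, q1]
    have HG : G = (MvPowerSeries.X 0) ^ 2 + MvPowerSeries.C (σ := Fin 2) (R := ℂ) (2 * I) *
        MvPowerSeries.X 1 + (MvPowerSeries.X 1) ^ 2 := by
      rw [hG, ← MvPolynomial.coe_C, ← MvPolynomial.coe_X (σ := Fin 2) (s := 1),
        ← MvPolynomial.coe_X (σ := Fin 2) (s := 0), ← MvPolynomial.coe_pow,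
        ← MvPolynomial.coe_pow, ← MvPolynomial.coe_mul, ← MvPolynomial.coe_add,
        ← MvPolynomial.coe_add, q2]
    set c : MvPowerSeries (Fin 2) ℂ := MvPowerSeries.C (σ := Fin 2) (R := ℂ) (t0 * 2⁻¹) with hc
    set d : MvPowerSeries (Fin 2) ℂ := MvPowerSeries.C (σ := Fin 2) (R := ℂ) (2 * I) with hd
    have hspan : Ideal.span {F, G} =
        Ideal.span {MvPowerSeries.X 1, (MvPowerSeries.X 0 : MvPowerSeries (Fin 2) ℂ) ^ 2} := by
      set J := Ideal.span {MvPowerSeries.X 1,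
        (MvPowerSeries.X 0 : MvPowerSeries (Fin 2) ℂ) ^ 2} with hJ
      set I := Ideal.span {F, G} with hI
      have hX1J : MvPowerSeries.X 1 ∈ J := Ideal.subset_span (by simp)
      have hX0J : (MvPowerSeries.X 0 : MvPowerSeries (Fin 2) ℂ) ^ 2 ∈ J :=
        Ideal.subset_span (by simp)
      have hFI : F ∈ I := Ideal.subset_span (by simp)
      have hGI : G ∈ I := Ideal.subset_span (by simp)
      have hGJ : G ∈ J := by
        rw [HG]
        exact add_mem (add_mem hX0J (J.mul_mem_left d hX1J))
          (by rw [sq]; exact J.mul_mem_left _ hX1J)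
      have hFJ : F ∈ J := by
        have hFeq : F = MvPowerSeries.X 1 - c * G := by linear_combination HF
        rw [hFeq]
        exact sub_mem hX1J (J.mul_mem_left c hGJ)
      have hX1I : MvPowerSeries.X 1 ∈ I := by
        rw [← HF]
        exact add_mem hFI (I.mul_mem_left c hGI)
      have hX0I : (MvPowerSeries.X 0 : MvPowerSeries (Fin 2) ℂ) ^ 2 ∈ I := by
        have hXeq : (MvPowerSeries.X 0 : MvPowerSeries (Fin 2) ℂ) ^ 2 =
            G - d * MvPowerSeries.X 1 - (MvPowerSeries.X 1) ^ 2 := by linear_combination -HG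
        rw [hXeq]
        exact sub_mem (sub_mem hGI (I.mul_mem_left d hX1I))
          (by rw [sq]; exact I.mul_mem_left _ hX1I)
      apply le_antisymm
      · rw [hI, Ideal.span_le]
        rintro x (rfl | rfl)
        · exact hFJ
        · exact hGJ
      · rw [hJ, Ideal.span_le]
        rintro x (rfl | rfl)
        · exact hX1I
        · exact hX0I
    rw [interMult, ← hF, ← hG, hspan]
    exact finrank_quot
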